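/- For 1 ≤ j ≤ n, define the j×j matrices M_{i_1,…,i_j} with rows labeled by indices i_1 < … < i_j and (a,b)-entry ζ_{i_a}^{b−1} q_{i_a}^{(j+1−2b)}(u), where q_i(u) = u − p_i and q^{(m)}(u) = q(ħ^{−m/2}u), and the Vandermonde matrices V_{i_1,…,i_j} with (a,b)-entry ζ_{i_a}^{b−1}. Define Q_j(u) = det(M_{1,…,j})/det(V_{1,…,j}) and Q̃_j(u) = det(M_{1,…,j−1,j+1})/det(V_{1,…,j−1,j+1}). Then for every 1 ≤ j ≤ n−1 the relation ζ_{j+1} Q_j^{(1)} Q̃_j^{(−1)} − ζ_j Q_j^{(−1)} Q̃_j^{(1)} = (ζ_{j+1} − ζ_j) Q_{j−1} Q_{j+1} holds, where Q_0 = 1. -/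
import Mathlib

open Finset

section DJ
open Matrix

lemma det_collapse {R : Type*} [CommRing R] {n : ℕ} (M : Matrix (Fin (n+1)) (Fin (n+1)) R)
    (jc kr : Fin (n+1)) (x : R) (hM : ∀ r, M r jc = if r = kr then x else 0) :
    M.det = (-1) ^ ((jc : ℕ) + (kr : ℕ)) * x *
      (M.submatrix kr.succAbove jc.succAbove).det := by
  rw [Matrix.det_succ_column M jc]
  rw [Finset.sum_eq_single kr]
  · rw [hM kr, if_pos rfl]; ring_nf
  · intro i _ hi
    rw [hM i, if_neg hi]; ring
  · intro hk; exact absurd (Finset.mem_univ kr) hk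

lemma perm_fix_two {N : ℕ} (σ : Equiv.Perm (Fin N)) (k k' : Fin N) (hkk : k ≠ k')
    (hfix : ∀ c, c ≠ k → c ≠ k' → σ c = c) : σ = 1 ∨ σ = Equiv.swap k k' := by
  have key : ∀ x, x = k ∨ x = k' → σ x = k ∨ σ x = k' := by
    intro x hx_mem
    by_contra hor; push_neg at hor
    have := hfix (σ x) hor.1 hor.2
    have hx := σ.injective this
    rcases hx_mem with rfl | rfl
    · exact hor.1 hx
    · exact hor.2 hx
  rcases key k (Or.inl rfl) with hk | hk
  · left; ext c
    by_cases h1 : c = k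
    · rw [h1, hk]; rfl
    by_cases h2 : c = k'
    · rcases key k' (Or.inr rfl) with h | h
      · exact absurd (σ.injective (hk.trans h.symm)) hkk
      · rw [h2, h]; rfl
    · rw [hfix c h1 h2]; rfl
  · right; ext c
    by_cases h1 : c = k
    · rw [h1, hk, Equiv.swap_apply_left]
    by_cases h2 : c = k'
    · rcases key k' (Or.inr rfl) with h | h
      · rw [h2, h, Equiv.swap_apply_right]
      · exact absurd (σ.injective (hk.trans h.symm)) hkk
    · rw [hfix c h1 h2, Equiv.swap_apply_of_ne_of_ne h1 h2]

lemma det_two_col {R : Type*} [CommRing R] {N : ℕ} (C : Matrix (Fin N) (Fin N) R)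
    (k k' : Fin N) (hkk : k ≠ k')
    (hC : ∀ r c, c ≠ k → c ≠ k' → C r c = if r = c then 1 else 0) :
    C.det = C k k * C k' k' - C k' k * C k k' := by
  classical
  rw [Matrix.det_apply']
  rw [← Finset.sum_subset (Finset.subset_univ
    ({1, Equiv.swap k k'} : Finset (Equiv.Perm (Fin N)))) ?_]
  · have hne : (1 : Equiv.Perm (Fin N)) ≠ Equiv.swap k k' := by
      intro h
      have := congrFun (congrArg (fun e : Equiv.Perm (Fin N) => (e : Fin N → Fin N)) h) k
      simp [Equiv.swap_apply_left] at this
      exact hkk this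
    rw [Finset.sum_pair hne]
    have hprod : ∀ σ : Equiv.Perm (Fin N), (∀ c, c ≠ k → c ≠ k' → σ c = c) →
        ∏ i, C (σ i) i = C (σ k) k * C (σ k') k' := by
      intro σ hσ
      have : ∏ i, C (σ i) i = ∏ i ∈ ({k, k'} : Finset (Fin N)), C (σ i) i := by
        refine (Finset.prod_subset (Finset.subset_univ _) ?_).symm
        intro x _ hx
        simp only [Finset.mem_insert, Finset.mem_singleton, not_or] at hx
        rw [hσ x hx.1 hx.2, hC x x hx.1 hx.2, if_pos rfl]
      rw [this, Finset.prod_pair hkk]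
    rw [hprod 1 (by intro c _ _; rfl), hprod (Equiv.swap k k') (by
      intro c h1 h2; exact Equiv.swap_apply_of_ne_of_ne h1 h2)]
    simp [Equiv.swap_apply_left, Equiv.swap_apply_right, Equiv.Perm.sign_swap hkk]
    ring
  · intro σ _ hσ
    simp only [Finset.mem_insert, Finset.mem_singleton, not_or] at hσ
    have : ∃ c, c ≠ k ∧ c ≠ k' ∧ σ c ≠ c := by
      by_contra hcon
      push_neg at hcon
      rcases perm_fix_two σ k k' hkk (fun c h1 h2 => hcon c h1 h2) with h | h
      · exact hσ.1 h
      · exact hσ.2 h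
    obtain ⟨c, h1, h2, h3⟩ := this
    have hz : C (σ c) c = 0 := by rw [hC _ _ h1 h2, if_neg h3]
    have : ∏ i, C (σ i) i = 0 := Finset.prod_eq_zero (Finset.mem_univ c) hz
    rw [this, mul_zero]

lemma fin_rowint (m : ℕ) (a : Fin m) :
    ((⟨m, by omega⟩ : Fin (m+2)).succAbove ((Fin.last m).succAbove a)) = ⟨a, by omega⟩ := by
  have := a.isLt
  simp [Fin.succAbove, Fin.lt_def, Fin.last, Fin.castSucc, Fin.castAdd, Fin.castLE]

lemma fin_colint (m : ℕ) (b : Fin m) :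
    ((0 : Fin (m+2)).succAbove ((Fin.last m).succAbove b)) = ⟨(b:ℕ)+1, by omega⟩ := by
  simp [Fin.succAbove, Fin.lt_def, Fin.last, Fin.succ, Fin.castSucc, Fin.castAdd, Fin.castLE]

lemma fin_succ0 (m : ℕ) (b : Fin (m+1)) :
    ((0 : Fin (m+2)).succAbove b) = ⟨(b:ℕ)+1, by omega⟩ := by
  simp [Fin.succAbove, Fin.lt_def, Fin.succ]

lemma fin_kmlast (m : ℕ) :
    ((⟨m, by omega⟩ : Fin (m+2)).succAbove (Fin.last m)) = ⟨m+1, by omega⟩ := by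
  simp [Fin.succAbove, Fin.lt_def, Fin.last]

/-- cofactor formula for cramer applied to a basis vector -/
lemma cramer_single {R : Type*} [CommRing R] {n : ℕ} (A : Matrix (Fin (n+1)) (Fin (n+1)) R)
    (i j : Fin (n+1)) :
    cramer A (Pi.single i 1) j =
      (-1) ^ ((j:ℕ) + (i:ℕ)) * (A.submatrix i.succAbove j.succAbove).det := by
  rw [Matrix.cramer_apply]
  rw [det_collapse (A.updateCol j (Pi.single i 1)) j i 1 (by
    intro r
    rw [Matrix.updateCol_apply, if_pos rfl, Pi.single_apply])]
  rw [mul_one]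
  have hs : ((A.updateCol j (Pi.single i 1)).submatrix i.succAbove j.succAbove)
      = A.submatrix i.succAbove j.succAbove := by
    ext a b
    rw [Matrix.submatrix_apply, Matrix.submatrix_apply, Matrix.updateCol_apply,
      if_neg (Fin.succAbove_ne j b)]
  rw [hs]

lemma DJ_aux {R : Type*} [CommRing R] (m : ℕ) (A : Matrix (Fin (m+2)) (Fin (m+2)) R) :
    A.det * ((A.submatrix (Fin.succAbove ⟨m, by omega⟩) (Fin.succAbove 0)).det *
      (A.submatrix (Fin.succAbove ⟨m+1, by omega⟩) (Fin.succAbove ⟨m+1, by omega⟩)).det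
    - (A.submatrix (Fin.succAbove ⟨m, by omega⟩) (Fin.succAbove ⟨m+1, by omega⟩)).det *
      (A.submatrix (Fin.succAbove ⟨m+1, by omega⟩) (Fin.succAbove 0)).det)
  = A.det * (A.det *
      (A.submatrix (fun a : Fin m => ⟨a, by omega⟩)
        (fun b : Fin m => ⟨(b:ℕ)+1, by omega⟩)).det) := by
  classical
  have hsq : (-1:R)^m * (-1:R)^m = 1 := by
    rw [← pow_add]; exact Even.neg_one_pow ⟨m, rfl⟩
  set km : Fin (m+2) := ⟨m, by omega⟩ with hkm
  set kl : Fin (m+2) := ⟨m+1, by omega⟩ with hkl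
  have h0l : (0 : Fin (m+2)) ≠ kl := by simp [hkl, Fin.ext_iff]
  set D1 := (A.submatrix (Fin.succAbove km) (Fin.succAbove 0)).det with hD1
  set D2 := (A.submatrix (Fin.succAbove kl) (Fin.succAbove kl)).det with hD2
  set D3 := (A.submatrix (Fin.succAbove km) (Fin.succAbove kl)).det with hD3
  set D4 := (A.submatrix (Fin.succAbove kl) (Fin.succAbove 0)).det with hD4
  set Din := (A.submatrix (fun a : Fin m => (⟨a, by omega⟩ : Fin (m+2)))
      (fun b : Fin m => (⟨(b:ℕ)+1, by omega⟩ : Fin (m+2)))).det with hDin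
  set C : Matrix (Fin (m+2)) (Fin (m+2)) R := Matrix.of fun r c =>
    if c = 0 then cramer A (Pi.single km 1) r
    else if c = kl then cramer A (Pi.single kl 1) r
    else if r = c then 1 else 0 with hCdef
  have hcol : ∀ (w : Fin (m+2)) (r : Fin (m+2)),
      (∑ s, A r s * cramer A (Pi.single w 1) s) = if r = w then A.det else 0 := by
    intro w r
    have := congrFun (Matrix.mulVec_cramer A (Pi.single w 1)) r
    simpa [Matrix.mulVec, dotProduct, Pi.single_apply] using this
  have hAC0 : ∀ r, (A * C) r 0 = if r = km then A.det else 0 := by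
    intro r
    rw [Matrix.mul_apply]
    simpa [hCdef] using hcol km r
  have hACl : ∀ r, (A * C) r kl = if r = kl then A.det else 0 := by
    intro r
    rw [Matrix.mul_apply]
    have hC : ∀ s, C s kl = cramer A (Pi.single kl 1) s := by
      intro s; simp [hCdef, h0l.symm]
    simp only [hC]
    exact hcol kl r
  have hACmid : ∀ r c, c ≠ 0 → c ≠ kl → (A * C) r c = A r c := by
    intro r c h1 h2
    rw [Matrix.mul_apply]
    have hC : ∀ s, C s c = if s = c then 1 else 0 := by intro s; simp [hCdef, h1, h2]
    simp only [hC, mul_ite, mul_one, mul_zero]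
    simp
  have hdetAC : (A * C).det = (-1)^m * (A.det * (A.det * Din)) := by
    rw [det_collapse (A * C) 0 km A.det hAC0]
    have hM2 : ∀ r' : Fin (m+1), ((A * C).submatrix km.succAbove (Fin.succAbove 0)) r' (Fin.last m)
        = if r' = Fin.last m then A.det else 0 := by
      intro r'
      have h1 : (0 : Fin (m+2)).succAbove (Fin.last m) = kl := by
        rw [fin_succ0]; simp [hkl, Fin.ext_iff, Fin.last]
      rw [Matrix.submatrix_apply, h1, hACl]
      congr 1
      simp only [eq_iff_iff]
      constructor
      · intro hfoo
        exact Fin.succAbove_right_injective (p := km) (hfoo.trans (fin_kmlast m).symm)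
      · rintro rfl; exact fin_kmlast m
    rw [det_collapse _ (Fin.last m) (Fin.last m) A.det hM2]
    have hsub : (((A * C).submatrix km.succAbove (Fin.succAbove 0)).submatrix
        (Fin.last m).succAbove (Fin.last m).succAbove) =
        (A.submatrix (fun a : Fin m => (⟨a, by omega⟩ : Fin (m+2)))
          (fun b : Fin m => (⟨(b:ℕ)+1, by omega⟩ : Fin (m+2)))) := by
      ext a b
      simp only [Matrix.submatrix_apply]
      rw [fin_rowint m a, fin_colint m b, hACmid]
      · simp [Fin.ext_iff]
      · simp [hkl, Fin.ext_iff]; omega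
    rw [hsub, ← hDin]
    have e1 : ((0 : Fin (m+2)) : ℕ) = 0 := rfl
    have e2 : ((km : Fin (m+2)) : ℕ) = m := rfl
    have e3 : ((Fin.last m : Fin (m+1)) : ℕ) = m := rfl
    rw [e1, e2, e3, zero_add]
    have e4 : ((-1:R))^(m+m) = 1 := Even.neg_one_pow ⟨m, rfl⟩
    rw [e4]
    ring
  have hdetC : C.det = (-1)^m * (D1 * D2 - D3 * D4) := by
    rw [det_two_col C 0 kl h0l (by
      intro r c h1 h2
      simp [hCdef, h1, h2])]
    have c00 : C 0 0 = (-1:R)^(0+m) * D1 := by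
      simp only [hCdef, Matrix.of_apply, if_pos rfl]
      rw [cramer_single]; rfl
    have cll : C kl kl = (-1:R)^((m+1)+(m+1)) * D2 := by
      simp only [hCdef, Matrix.of_apply, if_neg h0l.symm, if_pos rfl]
      rw [cramer_single]; rfl
    have cl0 : C kl 0 = (-1:R)^((m+1)+m) * D3 := by
      simp only [hCdef, Matrix.of_apply, if_pos rfl]
      rw [cramer_single]; rfl
    have c0l : C 0 kl = (-1:R)^(0+(m+1)) * D4 := by
      simp only [hCdef, Matrix.of_apply, if_neg h0l.symm, if_pos rfl]
      rw [cramer_single]; rfl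
    rw [c00, cll, cl0, c0l]
    have e2 : ((-1:R))^((m+1)+(m+1)) = 1 := Even.neg_one_pow ⟨m+1, by ring⟩
    have e1 : ((-1:R))^(0+m) = (-1:R)^m := by rw [zero_add]
    have e3 : ((-1:R))^((m+1)+m) = -1 := by
      have hmm : m+1+m = 2*m+1 := by ring
      rw [hmm]; exact Odd.neg_one_pow ⟨m, by ring⟩
    have e4 : ((-1:R))^(0+(m+1)) = -(-1:R)^m := by rw [zero_add, pow_succ]; ring
    rw [e1, e2, e3, e4]
    ring
  have key : (-1:R)^m * (A.det*(A.det*Din)) = A.det * ((-1:R)^m * (D1*D2 - D3*D4)) := by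
    rw [← hdetAC, ← hdetC, Matrix.det_mul]
  calc A.det * (D1*D2 - D3*D4)
      = ((-1:R)^m*(-1:R)^m) * (A.det*(D1*D2 - D3*D4)) := by rw [hsq, one_mul]
    _ = (-1:R)^m * (A.det * ((-1:R)^m * (D1*D2 - D3*D4))) := by ring
    _ = (-1:R)^m * ((-1:R)^m * (A.det*(A.det*Din))) := by rw [← key]
    _ = ((-1:R)^m*(-1:R)^m) * (A.det*(A.det*Din)) := by ring
    _ = A.det*(A.det*Din) := by rw [hsq, one_mul]

/-- Desnanot–Jacobi identity over arbitrary commutative rings. -/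
lemma DJ {R : Type*} [CommRing R] (m : ℕ) (A : Matrix (Fin (m+2)) (Fin (m+2)) R) :
    (A.submatrix (Fin.succAbove ⟨m, by omega⟩) (Fin.succAbove 0)).det *
      (A.submatrix (Fin.succAbove ⟨m+1, by omega⟩) (Fin.succAbove ⟨m+1, by omega⟩)).det
    - (A.submatrix (Fin.succAbove ⟨m, by omega⟩) (Fin.succAbove ⟨m+1, by omega⟩)).det *
      (A.submatrix (Fin.succAbove ⟨m+1, by omega⟩) (Fin.succAbove 0)).det
  = A.det *
      (A.submatrix (fun a : Fin m => ⟨a, by omega⟩)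
        (fun b : Fin m => ⟨(b:ℕ)+1, by omega⟩)).det := by
  classical
  set G : Matrix (Fin (m+2)) (Fin (m+2)) (MvPolynomial (Fin (m+2) × Fin (m+2)) ℤ) :=
    Matrix.of fun i j => MvPolynomial.X (i, j) with hG
  have hdet : G.det ≠ 0 := by
    intro h0
    have h1 := congrArg (MvPolynomial.eval
      (fun q : Fin (m+2) × Fin (m+2) => if q.1 = q.2 then (1:ℤ) else 0)) h0
    rw [RingHom.map_det, RingHom.mapMatrix_apply] at h1
    have h2 : G.map (MvPolynomial.eval
        (fun q : Fin (m+2) × Fin (m+2) => if q.1 = q.2 then (1:ℤ) else 0)) = 1 := by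
      ext i j
      simp [hG, Matrix.map_apply, Matrix.one_apply]
    rw [h2] at h1
    simp at h1
  have hgen := mul_left_cancel₀ hdet (DJ_aux m G)
  set φ : MvPolynomial (Fin (m+2) × Fin (m+2)) ℤ →+* R :=
    MvPolynomial.eval₂Hom (Int.castRingHom R) (fun q => A q.1 q.2) with hφ
  have h2 := congrArg φ hgen
  rw [map_sub, _root_.map_mul, _root_.map_mul, _root_.map_mul, RingHom.map_det, RingHom.map_det,
    RingHom.map_det, RingHom.map_det, RingHom.map_det, RingHom.map_det,
    RingHom.mapMatrix_apply, RingHom.mapMatrix_apply, RingHom.mapMatrix_apply,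
    RingHom.mapMatrix_apply, RingHom.mapMatrix_apply, RingHom.mapMatrix_apply] at h2
  have e : ∀ {k : ℕ} (r c : Fin k → Fin (m+2)), (G.submatrix r c).map φ = A.submatrix r c := by
    intro k r c
    ext i j
    simp [hG, hφ, Matrix.submatrix_apply, Matrix.map_apply]
  have e0 : G.map φ = A := by
    ext i j
    simp [hG, hφ, Matrix.map_apply]
  rw [e, e, e, e, e, e0] at h2
  exact h2

end DJ

/-- det of the matrix M_{i_1,…,i_j}(u) with (a,b)-entry ζ_{i_a}^{b} q_{i_a}^{(j−1−2b)}(u)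
(0-based b), where q_i(u) = u − p_i and q^{(m)}(u) = h^{−m}u − p_i, h = ħ^{1/2}. -/
noncomputable def Mdet {K : Type*} [Field K] {n : ℕ} (ζ p : Fin n → K) (h : K)
    (j : ℕ) (row : Fin j → Fin n) (u : K) : K :=
  Matrix.det (Matrix.of fun a b : Fin j =>
    ζ (row a) ^ (b : ℕ) *
      (h ^ (-((j : ℤ) - 1 - 2 * ((b : ℕ) : ℤ))) * u - p (row a)))

/-- det of the Vandermonde matrix V_{i_1,…,i_j}. -/
noncomputable def Vdet {K : Type*} [Field K] {n : ℕ} (ζ : Fin n → K)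
    (j : ℕ) (row : Fin j → Fin n) : K :=
  Matrix.det (Matrix.of fun a b : Fin j => ζ (row a) ^ (b : ℕ))

/-- Q_j(u) = det M_{1,…,j} / det V_{1,…,j}. -/
noncomputable def Qfun {K : Type*} [Field K] {n : ℕ} (ζ p : Fin n → K) (h : K)
    (j : ℕ) (hj : j ≤ n) (u : K) : K :=
  Mdet ζ p h j (fun a => ⟨a, lt_of_lt_of_le a.isLt hj⟩) u /
    Vdet ζ j (fun a => ⟨a, lt_of_lt_of_le a.isLt hj⟩)

/-- Q̃_j(u) = det M_{1,…,j−1,j+1} / det V_{1,…,j−1,j+1}. -/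
noncomputable def Qtfun {K : Type*} [Field K] {n : ℕ} (ζ p : Fin n → K) (h : K)
    (j : ℕ) (hj : j < n) (u : K) : K :=
  Mdet ζ p h j
    (fun a => if (a : ℕ) < j - 1 then ⟨a, by have := a.isLt; omega⟩ else ⟨j, hj⟩) u /
  Vdet ζ j
    (fun a => if (a : ℕ) < j - 1 then ⟨a, by have := a.isLt; omega⟩ else ⟨j, hj⟩)

lemma vdet_ne_zero {K : Type*} [Field K] {n : ℕ} (ζ : Fin n → K)
    (hζ : Function.Injective ζ) {j : ℕ} (row : Fin j → Fin n)
    (hrow : Function.Injective row) : Vdet ζ j row ≠ 0 := by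
  have hv : Vdet ζ j row = (Matrix.vandermonde (fun a => ζ (row a))).det := rfl
  rw [hv, Matrix.det_vandermonde]
  apply Finset.prod_ne_zero_iff.mpr
  intro i _
  apply Finset.prod_ne_zero_iff.mpr
  intro l hl
  have hil : i < l := Finset.mem_Ioi.mp hl
  refine sub_ne_zero.mpr fun hE => ?_
  exact absurd (hrow (hζ hE)) (Fin.ne_of_gt hil)

theorem stmt9 {K : Type*} [Field K] (n : ℕ) (ζ p : Fin n → K) (h : K) (hh : h ≠ 0)
    (hζ : Function.Injective ζ) (hζ0 : ∀ i, ζ i ≠ 0)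
    (j : ℕ) (hj1 : 1 ≤ j) (hj2 : j ≤ n - 1) (u : K) :
    ζ ⟨j, by omega⟩ * Qfun ζ p h j (by omega) (h⁻¹ * u) * Qtfun ζ p h j (by omega) (h * u)
  - ζ ⟨j - 1, by omega⟩ * Qfun ζ p h j (by omega) (h * u) *
      Qtfun ζ p h j (by omega) (h⁻¹ * u)
  = (ζ ⟨j, by omega⟩ - ζ ⟨j - 1, by omega⟩) *
      Qfun ζ p h (j - 1) (by omega) u * Qfun ζ p h (j + 1) (by omega) u := by
  obtain ⟨k, rfl⟩ : ∃ k, j = k + 1 := ⟨j - 1, by omega⟩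
  have hkn : k + 2 ≤ n := by omega
  simp only [Nat.add_sub_cancel]
  set rJ : Fin (k+2) → Fin n := fun a => ⟨a, lt_of_lt_of_le a.isLt hkn⟩ with hrJ
  set rs : Fin (k+1) → Fin n := fun a => ⟨a, by have := a.isLt; omega⟩ with hrs
  set rt : Fin (k+1) → Fin n :=
    fun a => if (a:ℕ) < k then ⟨a, by have := a.isLt; omega⟩ else ⟨k+1, by omega⟩ with hrt
  set rm : Fin k → Fin n := fun a => ⟨a, by have := a.isLt; omega⟩ with hrm
  -- the two big matrices
  set A : Matrix (Fin (k+2)) (Fin (k+2)) K := Matrix.of (fun a b : Fin (k+2) =>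
    ζ (rJ a) ^ (b : ℕ) *
      (h ^ (-(((k+2 : ℕ) : ℤ) - 1 - 2 * ((b : ℕ) : ℤ))) * u - p (rJ a))) with hA
  set B : Matrix (Fin (k+2)) (Fin (k+2)) K := Matrix.of (fun a b : Fin (k+2) =>
    ζ (rJ a) ^ (b : ℕ)) with hB
  have hAdet : A.det = Mdet ζ p h (k+2) rJ u := rfl
  have hBdet : B.det = Vdet ζ (k+2) rJ := rfl
  -- Fin bookkeeping
  have hsA_last : ∀ b : Fin (k+1), (⟨k+1, by omega⟩ : Fin (k+2)).succAbove b
      = ⟨(b:ℕ), by have := b.isLt; omega⟩ := by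
    intro b
    have hb := b.isLt
    simp [Fin.succAbove, Fin.lt_def, hb, Fin.castSucc, Fin.castAdd, Fin.castLE]
  have hsucc0 : ∀ b : Fin (k+1), (0 : Fin (k+2)).succAbove b
      = ⟨(b:ℕ)+1, by have := b.isLt; omega⟩ := fun b => fin_succ0 k b
  have hre_s : ∀ a : Fin (k+1), rJ ⟨(a:ℕ), by have := a.isLt; omega⟩ = rs a := fun a => rfl
  have hre_m : ∀ a : Fin k, rJ ⟨(a:ℕ), by have := a.isLt; omega⟩ = rm a := fun a => rfl
  have hsA_k : ∀ a : Fin (k+1), rJ ((⟨k, by omega⟩ : Fin (k+2)).succAbove a) = rt a := by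
    intro a
    have ha := a.isLt
    apply Fin.ext
    by_cases hak : (a:ℕ) < k
    · simp [hrt, hrJ, Fin.succAbove, Fin.lt_def, hak, Fin.castSucc, Fin.castAdd, Fin.castLE]
    · simp [hrt, hrJ, Fin.succAbove, Fin.lt_def, hak, Fin.succ]
      omega
  -- zpow shift helpers
  have zshift_inv : ∀ (v : K) (c : ℤ), h ^ (-c) * (h⁻¹ * v) = h ^ (-(c+1)) * v := by
    intro v c
    have e : (-(c+1)) = -c + (-1) := by ring
    rw [e, zpow_add₀ hh, zpow_neg_one, mul_assoc]
  have zshift_mul : ∀ (v : K) (c : ℤ), h ^ (-c) * (h * v) = h ^ (-(c-1)) * v := by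
    intro v c
    have e : (-(c-1)) = -c + 1 := by ring
    rw [e, zpow_add₀ hh, zpow_one, mul_assoc]
  -- the four minors and interior, M side
  have eMs1 : (A.submatrix (Fin.succAbove ⟨k+1, by omega⟩) (Fin.succAbove ⟨k+1, by omega⟩)).det
      = Mdet ζ p h (k+1) rs (h⁻¹ * u) := by
    have hmat : A.submatrix (Fin.succAbove (⟨k+1, by omega⟩ : Fin (k+2)))
        (Fin.succAbove (⟨k+1, by omega⟩ : Fin (k+2)))
        = Matrix.of (fun a b : Fin (k+1) => ζ (rs a) ^ (b : ℕ) *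
          (h ^ (-(((k+1 : ℕ) : ℤ) - 1 - 2 * ((b : ℕ) : ℤ))) * (h⁻¹ * u) - p (rs a))) := by
      ext a b
      simp only [Matrix.submatrix_apply, hsA_last, hA, Matrix.of_apply, hre_s]
      rw [zshift_inv]
      congr 3
      push_cast
      ring
    rw [hmat]
    rfl
  have hv2 : ∀ (x : ℕ) (hx : x < k+2), ((⟨x, hx⟩ : Fin (k+2)) : ℕ) = x := fun _ _ => rfl
  have eMt1 : (A.submatrix (Fin.succAbove ⟨k, by omega⟩) (Fin.succAbove ⟨k+1, by omega⟩)).det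
      = Mdet ζ p h (k+1) rt (h⁻¹ * u) := by
    have hmat : A.submatrix (Fin.succAbove (⟨k, by omega⟩ : Fin (k+2)))
        (Fin.succAbove (⟨k+1, by omega⟩ : Fin (k+2)))
        = Matrix.of (fun a b : Fin (k+1) => ζ (rt a) ^ (b : ℕ) *
          (h ^ (-(((k+1 : ℕ) : ℤ) - 1 - 2 * ((b : ℕ) : ℤ))) * (h⁻¹ * u) - p (rt a))) := by
      ext a b
      simp only [Matrix.submatrix_apply, hsA_last, hA, Matrix.of_apply, hsA_k]
      rw [zshift_inv]
      congr 3
      push_cast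
      ring
    rw [hmat]
    rfl
  have eMs2 : (A.submatrix (Fin.succAbove ⟨k+1, by omega⟩) (Fin.succAbove 0)).det
      = (∏ a : Fin (k+1), ζ (rs a)) * Mdet ζ p h (k+1) rs (h * u) := by
    have hmat : A.submatrix (Fin.succAbove (⟨k+1, by omega⟩ : Fin (k+2)))
        (Fin.succAbove (0 : Fin (k+2)))
        = Matrix.of (fun a b : Fin (k+1) => ζ (rs a) *
          ((Matrix.of (fun a b : Fin (k+1) => ζ (rs a) ^ (b : ℕ) *
            (h ^ (-(((k+1 : ℕ) : ℤ) - 1 - 2 * ((b : ℕ) : ℤ))) * (h * u) - p (rs a)))) a b)) := by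
      ext a b
      simp only [Matrix.submatrix_apply, hsA_last, hsucc0, hA, Matrix.of_apply, hre_s, hv2]
      rw [zshift_mul, pow_succ]
      have hexp : (-(((k+2:ℕ):ℤ) - 1 - 2 * ((((b:ℕ)+1) : ℕ) : ℤ)))
          = -((((k+1:ℕ):ℤ) - 1 - 2 * ((b:ℕ):ℤ)) - 1) := by push_cast; ring
      rw [hexp]
      ring
    rw [hmat, Matrix.det_mul_column]
    rfl
  have eMt2 : (A.submatrix (Fin.succAbove ⟨k, by omega⟩) (Fin.succAbove 0)).det
      = (∏ a : Fin (k+1), ζ (rt a)) * Mdet ζ p h (k+1) rt (h * u) := by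
    have hmat : A.submatrix (Fin.succAbove (⟨k, by omega⟩ : Fin (k+2)))
        (Fin.succAbove (0 : Fin (k+2)))
        = Matrix.of (fun a b : Fin (k+1) => ζ (rt a) *
          ((Matrix.of (fun a b : Fin (k+1) => ζ (rt a) ^ (b : ℕ) *
            (h ^ (-(((k+1 : ℕ) : ℤ) - 1 - 2 * ((b : ℕ) : ℤ))) * (h * u) - p (rt a)))) a b)) := by
      ext a b
      simp only [Matrix.submatrix_apply, hsucc0, hA, Matrix.of_apply, hsA_k, hv2]
      rw [zshift_mul, pow_succ]
      have hexp : (-(((k+2:ℕ):ℤ) - 1 - 2 * ((((b:ℕ)+1) : ℕ) : ℤ)))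
          = -((((k+1:ℕ):ℤ) - 1 - 2 * ((b:ℕ):ℤ)) - 1) := by push_cast; ring
      rw [hexp]
      ring
    rw [hmat, Matrix.det_mul_column]
    rfl
  have eMint : (A.submatrix (fun a : Fin k => (⟨a, by omega⟩ : Fin (k+2)))
        (fun b : Fin k => (⟨(b:ℕ)+1, by omega⟩ : Fin (k+2)))).det
      = (∏ a : Fin k, ζ (rm a)) * Mdet ζ p h k rm u := by
    have hmat : A.submatrix (fun a : Fin k => (⟨a, by omega⟩ : Fin (k+2)))
        (fun b : Fin k => (⟨(b:ℕ)+1, by omega⟩ : Fin (k+2)))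
        = Matrix.of (fun a b : Fin k => ζ (rm a) *
          ((Matrix.of (fun a b : Fin k => ζ (rm a) ^ (b : ℕ) *
            (h ^ (-(((k : ℕ) : ℤ) - 1 - 2 * ((b : ℕ) : ℤ))) * u - p (rm a)))) a b)) := by
      ext a b
      simp only [Matrix.submatrix_apply, hA, Matrix.of_apply, hre_m, hv2]
      rw [pow_succ]
      have hexp : (-(((k+2:ℕ):ℤ) - 1 - 2 * ((((b:ℕ)+1) : ℕ) : ℤ)))
          = -(((k:ℕ):ℤ) - 1 - 2 * ((b:ℕ):ℤ)) := by push_cast; ring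
      rw [hexp]
      ring
    rw [hmat, Matrix.det_mul_column]
    rfl
  -- V side
  have eVs1 : (B.submatrix (Fin.succAbove ⟨k+1, by omega⟩) (Fin.succAbove ⟨k+1, by omega⟩)).det
      = Vdet ζ (k+1) rs := by
    have hmat : B.submatrix (Fin.succAbove (⟨k+1, by omega⟩ : Fin (k+2)))
        (Fin.succAbove (⟨k+1, by omega⟩ : Fin (k+2)))
        = Matrix.of (fun a b : Fin (k+1) => ζ (rs a) ^ (b : ℕ)) := by
      ext a b
      simp only [Matrix.submatrix_apply, hsA_last, hB, Matrix.of_apply, hre_s, hv2]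
    rw [hmat]
    rfl
  have eVt1 : (B.submatrix (Fin.succAbove ⟨k, by omega⟩) (Fin.succAbove ⟨k+1, by omega⟩)).det
      = Vdet ζ (k+1) rt := by
    have hmat : B.submatrix (Fin.succAbove (⟨k, by omega⟩ : Fin (k+2)))
        (Fin.succAbove (⟨k+1, by omega⟩ : Fin (k+2)))
        = Matrix.of (fun a b : Fin (k+1) => ζ (rt a) ^ (b : ℕ)) := by
      ext a b
      simp only [Matrix.submatrix_apply, hsA_last, hB, Matrix.of_apply, hsA_k, hv2]
    rw [hmat]
    rfl
  have eVs2 : (B.submatrix (Fin.succAbove ⟨k+1, by omega⟩) (Fin.succAbove 0)).det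
      = (∏ a : Fin (k+1), ζ (rs a)) * Vdet ζ (k+1) rs := by
    have hmat : B.submatrix (Fin.succAbove (⟨k+1, by omega⟩ : Fin (k+2)))
        (Fin.succAbove (0 : Fin (k+2)))
        = Matrix.of (fun a b : Fin (k+1) => ζ (rs a) *
          ((Matrix.of (fun a b : Fin (k+1) => ζ (rs a) ^ (b : ℕ))) a b)) := by
      ext a b
      simp only [Matrix.submatrix_apply, hsA_last, hsucc0, hB, Matrix.of_apply, hre_s, hv2]
      rw [pow_succ]
      ring
    rw [hmat, Matrix.det_mul_column]
    rfl
  have eVt2 : (B.submatrix (Fin.succAbove ⟨k, by omega⟩) (Fin.succAbove 0)).det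
      = (∏ a : Fin (k+1), ζ (rt a)) * Vdet ζ (k+1) rt := by
    have hmat : B.submatrix (Fin.succAbove (⟨k, by omega⟩ : Fin (k+2)))
        (Fin.succAbove (0 : Fin (k+2)))
        = Matrix.of (fun a b : Fin (k+1) => ζ (rt a) *
          ((Matrix.of (fun a b : Fin (k+1) => ζ (rt a) ^ (b : ℕ))) a b)) := by
      ext a b
      simp only [Matrix.submatrix_apply, hsucc0, hB, Matrix.of_apply, hsA_k, hv2]
      rw [pow_succ]
      ring
    rw [hmat, Matrix.det_mul_column]
    rfl
  have eVint : (B.submatrix (fun a : Fin k => (⟨a, by omega⟩ : Fin (k+2)))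
        (fun b : Fin k => (⟨(b:ℕ)+1, by omega⟩ : Fin (k+2)))).det
      = (∏ a : Fin k, ζ (rm a)) * Vdet ζ k rm := by
    have hmat : B.submatrix (fun a : Fin k => (⟨a, by omega⟩ : Fin (k+2)))
        (fun b : Fin k => (⟨(b:ℕ)+1, by omega⟩ : Fin (k+2)))
        = Matrix.of (fun a b : Fin k => ζ (rm a) *
          ((Matrix.of (fun a b : Fin k => ζ (rm a) ^ (b : ℕ))) a b)) := by
      ext a b
      simp only [Matrix.submatrix_apply, hB, Matrix.of_apply, hre_m, hv2]
      rw [pow_succ]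
      ring
    rw [hmat, Matrix.det_mul_column]
    rfl
  -- products of ζ over the rows
  have hPs : (∏ a : Fin (k+1), ζ (rs a)) = (∏ a : Fin k, ζ (rm a)) * ζ ⟨k, by omega⟩ := by
    rw [Fin.prod_univ_castSucc]
    congr 1
  have hPt : (∏ a : Fin (k+1), ζ (rt a)) = (∏ a : Fin k, ζ (rm a)) * ζ ⟨k+1, by omega⟩ := by
    rw [Fin.prod_univ_castSucc]
    congr 1
    · refine Finset.prod_congr rfl fun a _ => ?_
      have ha : ((a.castSucc : Fin (k+1)) : ℕ) < k := a.isLt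
      simp only [hrt, ha, if_pos]
      rfl
    · simp [hrt, Fin.last]
  have hPm_ne : (∏ a : Fin k, ζ (rm a)) ≠ 0 :=
    Finset.prod_ne_zero_iff.mpr (fun a _ => hζ0 _)
  -- injectivity and nonvanishing of Vandermonde dets
  have hvn : ∀ (x : ℕ) (hx : x < n), ((⟨x, hx⟩ : Fin n) : ℕ) = x := fun _ _ => rfl
  have hrs_inj : Function.Injective rs := by
    intro x y hxy
    apply Fin.ext
    have hval := congrArg Fin.val hxy
    exact hval
  have hrm_inj : Function.Injective rm := by
    intro x y hxy
    apply Fin.ext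
    have hval := congrArg Fin.val hxy
    exact hval
  have hrJ_inj : Function.Injective rJ := by
    intro x y hxy
    apply Fin.ext
    have hval := congrArg Fin.val hxy
    exact hval
  have hrt_inj : Function.Injective rt := by
    intro x y hxy
    have hx := x.isLt
    have hy := y.isLt
    have hval := congrArg Fin.val hxy
    simp only [hrt, apply_ite Fin.val, hvn] at hval
    apply Fin.ext
    split_ifs at hval <;> omega
  have hVs_ne : Vdet ζ (k+1) rs ≠ 0 := vdet_ne_zero ζ hζ rs hrs_inj
  have hVt_ne : Vdet ζ (k+1) rt ≠ 0 := vdet_ne_zero ζ hζ rt hrt_inj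
  have hVm_ne : Vdet ζ k rm ≠ 0 := vdet_ne_zero ζ hζ rm hrm_inj
  have hVJ_ne : Vdet ζ (k+2) rJ ≠ 0 := vdet_ne_zero ζ hζ rJ hrJ_inj
  -- Desnanot–Jacobi for both matrices
  have hDJM := DJ k A
  rw [eMs1, eMs2, eMt1, eMt2, eMint, hAdet, hPs, hPt] at hDJM
  have hDJV := DJ k B
  rw [eVs1, eVs2, eVt1, eVt2, eVint, hBdet, hPs, hPt] at hDJV
  have hMrel : ζ ⟨k+1, by omega⟩ * Mdet ζ p h (k+1) rt (h * u) * Mdet ζ p h (k+1) rs (h⁻¹ * u)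
      - ζ ⟨k, by omega⟩ * Mdet ζ p h (k+1) rt (h⁻¹ * u) * Mdet ζ p h (k+1) rs (h * u)
      = Mdet ζ p h (k+2) rJ u * Mdet ζ p h k rm u := by
    apply mul_left_cancel₀ hPm_ne
    linear_combination hDJM
  have hVrel : (ζ ⟨k+1, by omega⟩ - ζ ⟨k, by omega⟩) * (Vdet ζ (k+1) rt * Vdet ζ (k+1) rs)
      = Vdet ζ (k+2) rJ * Vdet ζ k rm := by
    apply mul_left_cancel₀ hPm_ne
    linear_combination hDJV
  have final : ζ ⟨k+1, by omega⟩ * (Mdet ζ p h (k+1) rs (h⁻¹ * u) / Vdet ζ (k+1) rs) *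
        (Mdet ζ p h (k+1) rt (h * u) / Vdet ζ (k+1) rt)
      - ζ ⟨k, by omega⟩ * (Mdet ζ p h (k+1) rs (h * u) / Vdet ζ (k+1) rs) *
        (Mdet ζ p h (k+1) rt (h⁻¹ * u) / Vdet ζ (k+1) rt)
      = (ζ ⟨k+1, by omega⟩ - ζ ⟨k, by omega⟩) * (Mdet ζ p h k rm u / Vdet ζ k rm) *
        (Mdet ζ p h (k+2) rJ u / Vdet ζ (k+2) rJ) := by
    set Ms1 := Mdet ζ p h (k+1) rs (h⁻¹ * u) with hXa
    set Ms2 := Mdet ζ p h (k+1) rs (h * u) with hXb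
    set Mt1 := Mdet ζ p h (k+1) rt (h⁻¹ * u) with hXc
    set Mt2 := Mdet ζ p h (k+1) rt (h * u) with hXd
    set Mm := Mdet ζ p h k rm u with hXe
    set MJ := Mdet ζ p h (k+2) rJ u with hXf
    set Vs := Vdet ζ (k+1) rs with hXg
    set Vt := Vdet ζ (k+1) rt with hXh
    set Vm := Vdet ζ k rm with hXi
    set VJ := Vdet ζ (k+2) rJ with hXj
    field_simp
    linear_combination (Vm * VJ) * hMrel - (Mm * MJ) * hVrel
  exact final
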